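/- Intercept-only equicorrelated model: let 0 < b < a, let cluster g have design vector X_g = 𝟙 (the all-ones vector in ℝ^{N_g}), and let ε_1,…,ε_G be mutually independent mean-zero random vectors with Cov(ε_g) = Ω_g = (a − b) I_{N_g} + b 𝟙𝟙ᵀ. For Y_g = β 𝟙 + ε_g, the cluster-average estimator β̂ = (1/G) Σ_g (𝟙ᵀ𝟙)⁻¹ 𝟙ᵀY_g has variance Var(β̂) = (a − b)/G² · Σ_{g=1}^G 1/N_g + b/G, and the pooled OLS estimator β̂_POLS = (Σ_g 𝟙ᵀY_g)/(Σ_g N_g) has variance Var(β̂_POLS) = (a − b)/(Σ_{g=1}^G N_g) + b · (Σ_{g=1}^G N_g²)/(Σ_{g=1}^G N_g)². -/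

import Mathlib

open MeasureTheory ProbabilityTheory

lemma var_const_add {Ω : Type*} [MeasurableSpace Ω] {μ : Measure Ω} [IsProbabilityMeasure μ]
    (c : ℝ) {Z : Ω → ℝ} (hZ : Integrable Z μ) :
    variance (fun ω => c + Z ω) μ = variance Z μ := by
  have hint : ∫ ω, (c + Z ω) ∂μ = c + ∫ ω, Z ω ∂μ := by
    rw [integral_add (integrable_const c) hZ, integral_const]
    simp
  unfold ProbabilityTheory.variance ProbabilityTheory.evariance
  congr 1
  refine lintegral_congr fun ω => ?_
  rw [hint]
  have h2 : c + Z ω - (c + ∫ ω, Z ω ∂μ) = Z ω - ∫ ω, Z ω ∂μ := by ring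
  rw [h2]

/-- exact variance formulas from the proof of the paper's
Result 2.  In the intercept-only model with equicorrelated within-cluster
errors, `Cov(ε_g) = (a−b)I + b𝟙𝟙ᵀ` (`0 < b < a`), the cluster-average
estimator has variance `(a−b)/G²·∑_g 1/N_g + b/G` and pooled OLS has variance
`(a−b)/∑_g N_g + b·(∑_g N_g²)/(∑_g N_g)²`. -/
theorem stmt11 {Ωs : Type*} [MeasurableSpace Ωs] (μ : Measure Ωs) [IsProbabilityMeasure μ]
    (G : ℕ) (hG : 1 ≤ G) (N : Fin G → ℕ) (hN : ∀ g, 1 ≤ N g)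
    (a b : ℝ) (hb : 0 < b) (hba : b < a)
    (β : ℝ)
    (ε : (g : Fin G) → Ωs → (Fin (N g) → ℝ))
    (hmeas : ∀ g, Measurable (ε g))
    (hL2 : ∀ g i, Integrable (fun ω => (ε g ω i) ^ 2) μ)
    (hmean : ∀ g i, ∫ ω, ε g ω i ∂μ = 0)
    (hCov : ∀ g i j, ∫ ω, ε g ω i * ε g ω j ∂μ = if i = j then a else b)
    (hindep : iIndepFun ε μ)
    (betaHat : Ωs → ℝ)
    (hbetaHat : ∀ ω, betaHat ω =
      (G : ℝ)⁻¹ * ∑ g, (∑ i, (β + ε g ω i)) / (N g : ℝ))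
    (betaPOLS : Ωs → ℝ)
    (hbetaPOLS : ∀ ω, betaPOLS ω =
      (∑ g, ∑ i, (β + ε g ω i)) / ∑ g, (N g : ℝ)) :
    variance betaHat μ =
      (a - b) / (G : ℝ) ^ 2 * (∑ g, ((N g : ℝ))⁻¹) + b / (G : ℝ) ∧
    variance betaPOLS μ =
      (a - b) / (∑ g, (N g : ℝ)) + b * (∑ g, (N g : ℝ) ^ 2) / (∑ g, (N g : ℝ)) ^ 2 := by
  have hNne : ∀ g, (N g : ℝ) ≠ 0 := fun g => by
    exact Nat.cast_ne_zero.mpr (Nat.one_le_iff_ne_zero.mp (hN g))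
  have hGne : (G : ℝ) ≠ 0 := by
    exact Nat.cast_ne_zero.mpr (Nat.one_le_iff_ne_zero.mp hG)
  have hmeasi : ∀ g i, Measurable (fun ω => ε g ω i) :=
    fun g i => (measurable_pi_apply i).comp (hmeas g)
  have hℒ2 : ∀ g i, MemLp (fun ω => ε g ω i) 2 μ := fun g i =>
    (memLp_two_iff_integrable_sq (hmeasi g i).aestronglyMeasurable).2 (hL2 g i)
  have hint1 : ∀ g i, Integrable (fun ω => ε g ω i) μ :=
    fun g i => (hℒ2 g i).integrable one_le_two
  -- cluster sums
  set S : (g : Fin G) → Ωs → ℝ := fun g ω => ∑ i, ε g ω i with hS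
  have hSℒ2 : ∀ g, MemLp (S g) 2 μ := fun g =>
    memLp_finset_sum _ (fun i _ => hℒ2 g i)
  have hSmean : ∀ g, ∫ ω, S g ω ∂μ = 0 := by
    intro g
    rw [integral_finset_sum _ (fun i _ => hint1 g i)]
    simp [hmean g]
  have hprod : ∀ g i j, Integrable (fun ω => ε g ω i * ε g ω j) μ := by
    intro g i j
    exact memLp_one_iff_integrable.mp
      ((hℒ2 g j).smul (hℒ2 g i) (p := 2) (q := 2) (r := 1))
  have hSvar : ∀ g, variance (S g) μ = (a - b) * (N g : ℝ) + b * (N g : ℝ) ^ 2 := by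
    intro g
    rw [variance_of_integral_eq_zero (hSℒ2 g).aestronglyMeasurable.aemeasurable (hSmean g)]
    have hpt : ∀ ω, (S g ^ 2) ω = ∑ i, ∑ j, ε g ω i * ε g ω j := by
      intro ω
      simp only [Pi.pow_apply, hS, sq]
      rw [Finset.sum_mul_sum]
    calc ∫ ω, (S g ^ 2) ω ∂μ = ∫ ω, ∑ i, ∑ j, ε g ω i * ε g ω j ∂μ := by
          exact integral_congr_ae (Filter.Eventually.of_forall hpt)
      _ = ∑ i, ∑ j, ∫ ω, ε g ω i * ε g ω j ∂μ := by
          rw [integral_finset_sum _ (fun i _ =>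
            integrable_finset_sum _ (fun j _ => hprod g i j))]
          exact Finset.sum_congr rfl fun i _ =>
            integral_finset_sum _ (fun j _ => hprod g i j)
      _ = ∑ i : Fin (N g), ((a - b) + (N g : ℝ) * b) := by
          refine Finset.sum_congr rfl fun i _ => ?_
          simp only [hCov g]
          have : ∀ j : Fin (N g), (if i = j then a else b)
              = (if i = j then a - b else 0) + b := by
            intro j; split <;> ring
          rw [Finset.sum_congr rfl fun j _ => this j, Finset.sum_add_distrib,
            Finset.sum_ite_eq, Finset.sum_const]
          simp [Finset.card_univ]
      _ = (a - b) * (N g : ℝ) + b * (N g : ℝ) ^ 2 := by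
          rw [Finset.sum_const, Finset.card_univ]
          simp only [Fintype.card_fin, nsmul_eq_mul]
          ring
  -- main formula for linear combinations
  have key : ∀ (c : Fin G → ℝ) (W : Ωs → ℝ),
      (∀ ω, W ω = β + ∑ g, c g * S g ω) →
      variance W μ = ∑ g, (c g) ^ 2 * ((a - b) * (N g : ℝ) + b * (N g : ℝ) ^ 2) := by
    intro c W hW
    set T : Fin G → Ωs → ℝ := fun g => c g • S g with hT
    have hTℒ2 : ∀ g, MemLp (T g) 2 μ := fun g => (hSℒ2 g).const_smul (c g)
    have hWeq : W = fun ω => β + (∑ g, T g) ω := by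
      funext ω
      rw [hW ω]
      simp [hT, Finset.sum_apply, smul_eq_mul]
    rw [hWeq, var_const_add β (integrable_finset_sum' _ (fun g _ => (hTℒ2 g).integrable one_le_two))]
    have hTindep : iIndepFun T μ := by
      refine hindep.comp (fun g v => c g * ∑ i, v i) (fun g => ?_)
      exact (measurable_const.mul (Finset.measurable_sum _ fun i _ => measurable_pi_apply i))
    rw [IndepFun.variance_sum (fun g _ => hTℒ2 g)
      (fun i _ j _ hij => hTindep.indepFun hij)]
    refine Finset.sum_congr rfl fun g _ => ?_
    rw [hT]
    rw [variance_smul (c g) (S g) μ, hSvar g]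
  -- the two estimators
  have hMne : (∑ g, (N g : ℝ)) ≠ 0 := by
    have : (0:ℝ) < ∑ g, (N g : ℝ) := by
      apply Finset.sum_pos
      · intro g _; exact_mod_cast hN g
      · exact Finset.univ_nonempty_iff.mpr (Fin.pos_iff_nonempty.mp (by omega))
    exact this.ne'
  constructor
  · have h1 : variance betaHat μ
        = ∑ g, ((G : ℝ)⁻¹ * (N g : ℝ)⁻¹) ^ 2 * ((a - b) * (N g : ℝ) + b * (N g : ℝ) ^ 2) := by
      refine key _ _ fun ω => ?_
      rw [hbetaHat ω]
      have : ∀ g : Fin G, (∑ i, (β + ε g ω i)) / (N g : ℝ)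
          = β + (N g : ℝ)⁻¹ * S g ω := by
        intro g
        rw [Finset.sum_add_distrib, Finset.sum_const, Finset.card_univ]
        simp only [Fintype.card_fin, nsmul_eq_mul, hS]
        field_simp [hNne g]
        try ring
      rw [Finset.sum_congr rfl fun g _ => this g, Finset.sum_add_distrib,
        Finset.sum_const, Finset.card_univ]
      simp only [Fintype.card_fin, nsmul_eq_mul]
      rw [mul_add, Finset.mul_sum]
      have : (G : ℝ)⁻¹ * ((G : ℝ) * β) = β := by field_simp
      rw [this]
      refine congrArg (β + ·) (Finset.sum_congr rfl fun g _ => by ring)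
    rw [h1]
    have : ∀ g : Fin G, ((G : ℝ)⁻¹ * (N g : ℝ)⁻¹) ^ 2 * ((a - b) * (N g : ℝ) + b * (N g : ℝ) ^ 2)
        = (a - b) / (G : ℝ) ^ 2 * (N g : ℝ)⁻¹ + b / (G : ℝ) ^ 2 := by
      intro g
      field_simp [hNne g, hGne]
    rw [Finset.sum_congr rfl fun g _ => this g, Finset.sum_add_distrib, Finset.sum_const,
      Finset.card_univ]
    simp only [Fintype.card_fin, nsmul_eq_mul]
    rw [← Finset.mul_sum]
    congr 1
    field_simp
  · have h1 : variance betaPOLS μ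
        = ∑ g, ((∑ g, (N g : ℝ))⁻¹) ^ 2 * ((a - b) * (N g : ℝ) + b * (N g : ℝ) ^ 2) := by
      refine key _ _ fun ω => ?_
      rw [hbetaPOLS ω]
      have hnum : (∑ g, ∑ i, (β + ε g ω i)) = (∑ g, (N g : ℝ)) * β + ∑ g, S g ω := by
        rw [Finset.sum_mul, ← Finset.sum_add_distrib]
        refine Finset.sum_congr rfl fun g _ => ?_
        rw [Finset.sum_add_distrib, Finset.sum_const, Finset.card_univ]
        simp [Fintype.card_fin, nsmul_eq_mul, hS]
      rw [hnum, div_eq_inv_mul, mul_add]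
      have : (∑ g, (N g : ℝ))⁻¹ * ((∑ g, (N g : ℝ)) * β) = β := by field_simp
      rw [this, Finset.mul_sum]
    rw [h1]
    rw [Finset.sum_congr rfl (fun g _ => (mul_add _ _ _)), Finset.sum_add_distrib]
    congr 1
    · rw [← Finset.mul_sum]
      have : ∑ g, (a - b) * (N g : ℝ) = (a - b) * ∑ g, (N g : ℝ) := by
        rw [Finset.mul_sum]
      rw [this]
      field_simp
      try ring
    · rw [← Finset.mul_sum]
      have : ∑ g, b * (N g : ℝ) ^ 2 = b * ∑ g, (N g : ℝ) ^ 2 := by rw [Finset.mul_sum]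
      rw [this]
      field_simp
      try ring
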